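/- If the parametric model is correctly specified, i.e., γ(x) = g(x;β₀) for all x, then the uncentered efficient influence function evaluated at β₀ reduces to φ(Z;β₀,η) = h(X;β₀)·[(μ_0(X)/μ_1(X)²)·A(Y-μ_1(X))/π(X) - (1/μ_1(X))·(1-A)(Y-μ_0(X))/(1-π(X))], and this has conditional mean zero given X; hence β₀ solves the population moment condition Ψ(β) = 0. -/

import Mathlib

open MeasureTheory ProbabilityTheory

/-- If the parametric model is correctly specified, `γ(x) = g(x;β₀)` for all `x`, then the
uncentered efficient influence function at `β₀` reduces to
`h(X;β₀)[(μ₀/μ₁²)A(Y-μ₁)/π - (1/μ₁)(1-A)(Y-μ₀)/(1-π)]`, this reduced function has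
conditional mean zero given `X`, and hence `β₀` solves the population moment condition
`Ψ(β₀) = E[φ(Z;β₀,η)] = 0`. -/
theorem stmt_14
    {Ω 𝒳 : Type*} [mΩ : MeasurableSpace Ω] [m𝒳 : MeasurableSpace 𝒳]
    (μ : Measure Ω) [IsProbabilityMeasure μ]
    (X : Ω → 𝒳) (A Y : Ω → ℝ)
    (hX : Measurable X) (hA : Measurable A) (hY : Measurable Y)
    (hAbin : ∀ ω, A ω = 0 ∨ A ω = 1) (hYbin : ∀ ω, Y ω = 0 ∨ Y ω = 1)
    (m0 m1 pi gam h g : 𝒳 → ℝ)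
    (hm0 : Measurable m0) (hm1 : Measurable m1) (hpi : Measurable pi)
    (hh : Measurable h) (hg : Measurable g)
    (hm1pos : ∀ x, 0 < m1 x) (hm0nonneg : ∀ x, 0 ≤ m0 x)
    (hpi0 : ∀ x, 0 < pi x) (hpi1 : ∀ x, pi x < 1)
    (hgam : ∀ x, gam x = 1 - m0 x / m1 x)
    -- correct specification: γ(x) = g(x;β₀)
    (hspec : ∀ x, gam x = g x)
    -- μ₀, μ₁, π are the true nuisance functions (conditional moments given X)
    (hπX : μ[A | m𝒳.comap X] =ᵐ[μ] fun ω => pi (X ω))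
    (hAY : μ[fun ω => A ω * Y ω | m𝒳.comap X] =ᵐ[μ] fun ω => pi (X ω) * m1 (X ω))
    (h1Y : μ[fun ω => (1 - A ω) * Y ω | m𝒳.comap X]
      =ᵐ[μ] fun ω => (1 - pi (X ω)) * m0 (X ω))
    -- integrability
    (hintφ : Integrable (fun ω =>
      h (X ω) * (m0 (X ω) / m1 (X ω) ^ 2 * (A ω * (Y ω - m1 (X ω))) / pi (X ω)
        - 1 / m1 (X ω) * ((1 - A ω) * (Y ω - m0 (X ω))) / (1 - pi (X ω))
        + gam (X ω) - g (X ω))) μ)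
    (hintc1 : Integrable (fun ω => h (X ω) * (m0 (X ω) / m1 (X ω) ^ 2) / pi (X ω)) μ)
    (hintc2 : Integrable (fun ω => h (X ω) / (m1 (X ω) * (1 - pi (X ω)))) μ) :
    -- (i) the influence function reduces pointwise
    (∀ ω, h (X ω) * (m0 (X ω) / m1 (X ω) ^ 2 * (A ω * (Y ω - m1 (X ω))) / pi (X ω)
          - 1 / m1 (X ω) * ((1 - A ω) * (Y ω - m0 (X ω))) / (1 - pi (X ω))
          + gam (X ω) - g (X ω))
      = h (X ω) * (m0 (X ω) / m1 (X ω) ^ 2 * (A ω * (Y ω - m1 (X ω))) / pi (X ω)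
          - 1 / m1 (X ω) * ((1 - A ω) * (Y ω - m0 (X ω))) / (1 - pi (X ω))))
    -- (ii) the reduced function has conditional mean zero given X
    ∧ (μ[fun ω => h (X ω) * (m0 (X ω) / m1 (X ω) ^ 2 * (A ω * (Y ω - m1 (X ω))) / pi (X ω)
          - 1 / m1 (X ω) * ((1 - A ω) * (Y ω - m0 (X ω))) / (1 - pi (X ω))) | m𝒳.comap X]
        =ᵐ[μ] fun _ => (0 : ℝ))
    -- (iii) β₀ solves the population moment condition
    ∧ ∫ ω, h (X ω) * (m0 (X ω) / m1 (X ω) ^ 2 * (A ω * (Y ω - m1 (X ω))) / pi (X ω)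
          - 1 / m1 (X ω) * ((1 - A ω) * (Y ω - m0 (X ω))) / (1 - pi (X ω))
          + gam (X ω) - g (X ω)) ∂μ = 0 :=
  by
  classical
  have hm : m𝒳.comap X ≤ mΩ := hX.comap_le
  haveI : SigmaFinite (μ.trim hm) := inferInstance
  have hXm : Measurable[m𝒳.comap X] X := fun s hs => ⟨s, hs, rfl⟩
  have hA01 : ∀ ω, 0 ≤ A ω ∧ A ω ≤ 1 := fun ω => by
    rcases hAbin ω with h' | h' <;> simp [h']
  have hY01 : ∀ ω, 0 ≤ Y ω ∧ Y ω ≤ 1 := fun ω => by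
    rcases hYbin ω with h' | h' <;> simp [h']
  -- the reduced influence function and the auxiliary coefficient functions
  set a : Ω → ℝ := fun ω => h (X ω) * (m0 (X ω) / m1 (X ω) ^ 2) / pi (X ω) with ha_def
  set b : Ω → ℝ := fun ω => h (X ω) / (m1 (X ω) * (1 - pi (X ω))) with hb_def
  set g1 : Ω → ℝ := fun ω => a ω * (A ω * Y ω) with hg1_def
  set g2 : Ω → ℝ := fun ω => (a ω * m1 (X ω)) * A ω with hg2_def
  set g3 : Ω → ℝ := fun ω => b ω * ((1 - A ω) * Y ω) with hg3_def
  set g4 : Ω → ℝ := fun ω => (b ω * m0 (X ω)) * (1 - A ω) with hg4_def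
  -- measurability (w.r.t. comap X) of the coefficient functions
  have haM : Measurable[m𝒳.comap X] a :=
    ((hh.comp hXm).mul ((hm0.comp hXm).div ((hm1.comp hXm).pow_const 2))).div (hpi.comp hXm)
  have hbM : Measurable[m𝒳.comap X] b :=
    (hh.comp hXm).div ((hm1.comp hXm).mul (measurable_const.sub (hpi.comp hXm)))
  have haM0 : Measurable a := haM.mono hm le_rfl
  have hbM0 : Measurable b := hbM.mono hm le_rfl
  -- basic integrability
  have intA : Integrable A μ := by
    refine Integrable.mono' (integrable_const (1 : ℝ)) hA.aestronglyMeasurable ?_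
    refine ae_of_all _ fun ω => ?_
    rw [Real.norm_eq_abs, abs_of_nonneg (hA01 ω).1]
    exact (hA01 ω).2
  have intAY : Integrable (fun ω => A ω * Y ω) μ := by
    refine Integrable.mono' (integrable_const (1 : ℝ)) (hA.mul hY).aestronglyMeasurable ?_
    refine ae_of_all _ fun ω => ?_
    rw [Real.norm_eq_abs, abs_of_nonneg (mul_nonneg (hA01 ω).1 (hY01 ω).1)]
    nlinarith [(hA01 ω).1, (hA01 ω).2, (hY01 ω).1, (hY01 ω).2]
  have int1A : Integrable (fun ω => 1 - A ω) μ := by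
    refine Integrable.mono' (integrable_const (1 : ℝ))
      (measurable_const.sub hA).aestronglyMeasurable ?_
    refine ae_of_all _ fun ω => ?_
    rw [Real.norm_eq_abs, abs_of_nonneg (by linarith [(hA01 ω).2])]
    linarith [(hA01 ω).1]
  have int1AY : Integrable (fun ω => (1 - A ω) * Y ω) μ := by
    refine Integrable.mono' (integrable_const (1 : ℝ))
      ((measurable_const.sub hA).mul hY).aestronglyMeasurable ?_
    refine ae_of_all _ fun ω => ?_
    rw [Real.norm_eq_abs,
      abs_of_nonneg (mul_nonneg (by linarith [(hA01 ω).2]) (hY01 ω).1)]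
    nlinarith [(hA01 ω).1, (hA01 ω).2, (hY01 ω).1, (hY01 ω).2]
  -- E[1 - A | X] = 1 - π(X)
  have hcA' : μ[fun ω => 1 - A ω | m𝒳.comap X] =ᵐ[μ] fun ω => 1 - pi (X ω) := by
    have h1 : μ[fun ω => 1 - A ω | m𝒳.comap X]
        =ᵐ[μ] μ[(fun _ => (1 : ℝ)) | m𝒳.comap X] - μ[A | m𝒳.comap X] :=
      condExp_sub (integrable_const 1) intA _
    have h2 : μ[(fun _ => (1 : ℝ)) | m𝒳.comap X] = fun _ => (1 : ℝ) := condExp_const hm 1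
    filter_upwards [h1, hπX] with ω hω1 hω2
    rw [hω1]
    simp [h2, hω2]
  -- a.e. bounds m1(X) ≤ 1 and m0(X) ≤ 1
  have hm1le : ∀ᵐ ω ∂μ, m1 (X ω) ≤ 1 := by
    have hmono := condExp_mono (m := m𝒳.comap X) intAY intA
      (ae_of_all _ fun ω => by
        rcases hYbin ω with h' | h' <;> simp [h', (hA01 ω).1])
    filter_upwards [hmono, hAY, hπX] with ω h1 h2 h3
    rw [h2, h3] at h1
    nlinarith [hpi0 (X ω)]
  have hm0le : ∀ᵐ ω ∂μ, m0 (X ω) ≤ 1 := by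
    have hmono := condExp_mono (m := m𝒳.comap X) int1AY int1A
      (ae_of_all _ fun ω => by
        rcases hYbin ω with h' | h' <;> simp [h'] <;> linarith [(hA01 ω).2])
    filter_upwards [hmono, h1Y, hcA'] with ω h1 h2 h3
    rw [h2, h3] at h1
    nlinarith [hpi1 (X ω)]
  -- integrability of the four pieces
  have intg1 : Integrable g1 μ := by
    refine Integrable.mono' hintc1.abs (haM0.mul (hA.mul hY)).aestronglyMeasurable ?_
    refine ae_of_all _ fun ω => ?_
    rw [hg1_def, Real.norm_eq_abs, abs_mul]
    have h1 : |A ω * Y ω| ≤ 1 := by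
      rw [abs_of_nonneg (mul_nonneg (hA01 ω).1 (hY01 ω).1)]
      nlinarith [(hA01 ω).1, (hA01 ω).2, (hY01 ω).1, (hY01 ω).2]
    nlinarith [abs_nonneg (a ω), abs_nonneg (A ω * Y ω)]
  have intg2 : Integrable g2 μ := by
    refine Integrable.mono' hintc1.abs
      ((haM0.mul (hm1.comp hX)).mul hA).aestronglyMeasurable ?_
    filter_upwards [hm1le] with ω h1
    rw [hg2_def, Real.norm_eq_abs, abs_mul, abs_mul, abs_of_pos (hm1pos (X ω)),
      abs_of_nonneg (hA01 ω).1]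
    exact le_trans
      (mul_le_of_le_one_right (mul_nonneg (abs_nonneg _) (hm1pos (X ω)).le) (hA01 ω).2)
      (mul_le_of_le_one_right (abs_nonneg _) h1)
  have intg3 : Integrable g3 μ := by
    refine Integrable.mono' hintc2.abs
      (hbM0.mul ((measurable_const.sub hA).mul hY)).aestronglyMeasurable ?_
    refine ae_of_all _ fun ω => ?_
    rw [hg3_def, Real.norm_eq_abs, abs_mul]
    have h1 : |(1 - A ω) * Y ω| ≤ 1 := by
      rw [abs_of_nonneg (mul_nonneg (by linarith [(hA01 ω).2]) (hY01 ω).1)]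
      nlinarith [(hA01 ω).1, (hA01 ω).2, (hY01 ω).1, (hY01 ω).2]
    nlinarith [abs_nonneg (b ω), abs_nonneg ((1 - A ω) * Y ω)]
  have intg4 : Integrable g4 μ := by
    refine Integrable.mono' hintc2.abs
      ((hbM0.mul (hm0.comp hX)).mul (measurable_const.sub hA)).aestronglyMeasurable ?_
    filter_upwards [hm0le] with ω h1
    rw [hg4_def, Real.norm_eq_abs, abs_mul, abs_mul, abs_of_nonneg (hm0nonneg (X ω)),
      abs_of_nonneg (by linarith [(hA01 ω).2] : (0:ℝ) ≤ 1 - A ω)]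
    exact le_trans
      (mul_le_of_le_one_right (mul_nonneg (abs_nonneg _) (hm0nonneg (X ω)))
        (by linarith [(hA01 ω).1]))
      (mul_le_of_le_one_right (abs_nonneg _) h1)
  -- pull-out computations for each piece
  have hc1 : μ[g1 | m𝒳.comap X] =ᵐ[μ] a * μ[fun ω => A ω * Y ω | m𝒳.comap X] := by
    have := condExp_mul_of_stronglyMeasurable_left (μ := μ) haM.stronglyMeasurable
      (g := fun ω => A ω * Y ω) (by exact intg1) intAY
    exact this
  have hc2 : μ[g2 | m𝒳.comap X]
      =ᵐ[μ] (fun ω => a ω * m1 (X ω)) * μ[A | m𝒳.comap X] := by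
    have := condExp_mul_of_stronglyMeasurable_left (μ := μ)
      (haM.mul (hm1.comp hXm)).stronglyMeasurable (g := A) (by exact intg2) intA
    exact this
  have hc3 : μ[g3 | m𝒳.comap X]
      =ᵐ[μ] b * μ[fun ω => (1 - A ω) * Y ω | m𝒳.comap X] := by
    have := condExp_mul_of_stronglyMeasurable_left (μ := μ) hbM.stronglyMeasurable
      (g := fun ω => (1 - A ω) * Y ω) (by exact intg3) int1AY
    exact this
  have hc4 : μ[g4 | m𝒳.comap X]
      =ᵐ[μ] (fun ω => b ω * m0 (X ω)) * μ[fun ω => 1 - A ω | m𝒳.comap X] := by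
    have := condExp_mul_of_stronglyMeasurable_left (μ := μ)
      (hbM.mul (hm0.comp hXm)).stronglyMeasurable (g := fun ω => 1 - A ω)
      (by exact intg4) int1A
    exact this
  -- the reduced function equals g1 - g2 - g3 + g4
  have hsplit : (fun ω => h (X ω) * (m0 (X ω) / m1 (X ω) ^ 2 * (A ω * (Y ω - m1 (X ω))) / pi (X ω)
          - 1 / m1 (X ω) * ((1 - A ω) * (Y ω - m0 (X ω))) / (1 - pi (X ω))))
      = g1 - g2 - g3 + g4 := by
    funext ω
    have h1 : m1 (X ω) ≠ 0 := (hm1pos _).ne'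
    have h2 : pi (X ω) ≠ 0 := (hpi0 _).ne'
    have h3 : (1 : ℝ) - pi (X ω) ≠ 0 := sub_ne_zero.mpr (hpi1 _).ne'
    simp only [hg1_def, hg2_def, hg3_def, hg4_def, ha_def, hb_def, Pi.add_apply, Pi.sub_apply]
    field_simp
    ring
  -- conditional mean zero of the reduced function
  have hzero : μ[fun ω => h (X ω) * (m0 (X ω) / m1 (X ω) ^ 2 * (A ω * (Y ω - m1 (X ω))) / pi (X ω)
          - 1 / m1 (X ω) * ((1 - A ω) * (Y ω - m0 (X ω))) / (1 - pi (X ω))) | m𝒳.comap X]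
      =ᵐ[μ] fun _ => (0 : ℝ) := by
    rw [hsplit]
    have e1 : μ[g1 - g2 - g3 + g4 | m𝒳.comap X]
        =ᵐ[μ] μ[g1 - g2 - g3 | m𝒳.comap X] + μ[g4 | m𝒳.comap X] :=
      condExp_add ((intg1.sub intg2).sub intg3) intg4 _
    have e2 : μ[g1 - g2 - g3 | m𝒳.comap X]
        =ᵐ[μ] μ[g1 - g2 | m𝒳.comap X] - μ[g3 | m𝒳.comap X] :=
      condExp_sub (intg1.sub intg2) intg3 _
    have e3 : μ[g1 - g2 | m𝒳.comap X]
        =ᵐ[μ] μ[g1 | m𝒳.comap X] - μ[g2 | m𝒳.comap X] :=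
      condExp_sub intg1 intg2 _
    filter_upwards [e1, e2, e3, hc1, hc2, hc3, hc4, hAY, h1Y, hπX, hcA'] with ω
      he1 he2 he3 hhc1 hhc2 hhc3 hhc4 hhAY hh1Y hhπ hhcA
    simp only [Pi.add_apply, Pi.sub_apply, Pi.mul_apply] at he1 he2 he3 hhc1 hhc2 hhc3 hhc4 ⊢
    rw [he1, he2, he3, hhc1, hhc2, hhc3, hhc4, hhAY, hh1Y, hhπ, hhcA]
    ring
  refine ⟨fun ω => by rw [hspec (X ω)]; ring, hzero, ?_⟩
  -- the population moment condition
  have heq : (fun ω => h (X ω) * (m0 (X ω) / m1 (X ω) ^ 2 * (A ω * (Y ω - m1 (X ω))) / pi (X ω)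
          - 1 / m1 (X ω) * ((1 - A ω) * (Y ω - m0 (X ω))) / (1 - pi (X ω))
          + gam (X ω) - g (X ω)))
      = (fun ω => h (X ω) * (m0 (X ω) / m1 (X ω) ^ 2 * (A ω * (Y ω - m1 (X ω))) / pi (X ω)
          - 1 / m1 (X ω) * ((1 - A ω) * (Y ω - m0 (X ω))) / (1 - pi (X ω)))) := by
    funext ω
    rw [hspec (X ω)]
    ring
  rw [heq]
  rw [← integral_condExp (μ := μ) hm]
  rw [integral_congr_ae hzero]
  simp
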